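/- No linearizations in 𝔻𝕄(P) for singular polynomials: let P(λ) be a singular n×n matrix polynomial of degree k ≥ 2. Then no matrix pencil in 𝔻𝕄(P) = 𝕄₁(P) ∩ 𝕄₂(P) is a linearization of P(λ). -/

import Mathlib

open Polynomial Matrix

noncomputable section

/-- `Φ_k(λ) ⊗ I_n` as a `kn × n` polynomial matrix: its `i`-th block row (0-based)
is `φ_{k-1-i}(λ) I_n`. -/
def PhiMat (n k : ℕ) (φ : ℕ → Polynomial ℝ) :
    Matrix (Fin k × Fin n) (Fin n) (Polynomial ℝ) :=
  Matrix.of fun p s => if p.2 = s then φ (k - 1 - p.1.val) else 0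

/-- The matrix polynomial `P(λ) = Σ_{i=0}^k P_i φ_i(λ)`. -/
def matP (n k : ℕ) (φ : ℕ → Polynomial ℝ) (Pm : ℕ → Matrix (Fin n) (Fin n) ℝ) :
    Matrix (Fin n) (Fin n) (Polynomial ℝ) :=
  Matrix.of fun r s => ∑ i ∈ Finset.range (k + 1), C (Pm i r s) * φ i

/-- `v ⊗ Q` as a `kn × n` polynomial matrix. -/
def vKron (n k : ℕ) (v : Fin k → ℝ) (Q : Matrix (Fin n) (Fin n) (Polynomial ℝ)) :
    Matrix (Fin k × Fin n) (Fin n) (Polynomial ℝ) :=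
  Matrix.of fun p s => C (v p.1) * Q p.2 s

/-- `v^T ⊗ Q` as an `n × kn` polynomial matrix. -/
def vKronRow (n k : ℕ) (v : Fin k → ℝ) (Q : Matrix (Fin n) (Fin n) (Polynomial ℝ)) :
    Matrix (Fin n) (Fin k × Fin n) (Polynomial ℝ) :=
  Matrix.of fun s q => C (v q.1) * Q s q.2

/-- A matrix pencil: a matrix polynomial each of whose entries has degree at most `1`. -/
def IsPencil {m m' : Type*} (L : Matrix m m' (Polynomial ℝ)) : Prop :=
  ∀ p q, (L p q).degree ≤ 1

/-- `ℒ(λ) ∈ 𝕄₁(P)` with ansatz vector `v`, i.e. `ℒ(λ)(Φ_k(λ) ⊗ I_n) = v ⊗ P(λ)`. -/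
def Ansatz1 (n k : ℕ) (φ : ℕ → Polynomial ℝ) (Pm : ℕ → Matrix (Fin n) (Fin n) ℝ)
    (L : Matrix (Fin k × Fin n) (Fin k × Fin n) (Polynomial ℝ)) (v : Fin k → ℝ) : Prop :=
  L * PhiMat n k φ = vKron n k v (matP n k φ Pm)

/-- `ℒ(λ) ∈ 𝕄₂(P)` with ansatz vector `w`, i.e. `(Φ_k(λ)^T ⊗ I_n) ℒ(λ) = w^T ⊗ P(λ)`. -/
def Ansatz2 (n k : ℕ) (φ : ℕ → Polynomial ℝ) (Pm : ℕ → Matrix (Fin n) (Fin n) ℝ)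
    (L : Matrix (Fin k × Fin n) (Fin k × Fin n) (Polynomial ℝ)) (w : Fin k → ℝ) : Prop :=
  (PhiMat n k φ)ᵀ * L = vKronRow n k w (matP n k φ Pm)

/-- The anchor pencil `F_Φ^P(λ) = [m_Φ^P(λ); M_Φ(λ)]`. -/
def FPhi (n k : ℕ) (a b c : ℕ → ℝ) (Pm : ℕ → Matrix (Fin n) (Fin n) ℝ) :
    Matrix (Fin k × Fin n) (Fin k × Fin n) (Polynomial ℝ) :=
  Matrix.of fun p q =>
    if p.1.val = 0 then
      -- the block row m_Φ^P(λ)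
      if q.1.val = 0 then
        C ((a (k - 1))⁻¹) * (X - C (b (k - 1))) * C (Pm k p.2 q.2) + C (Pm (k - 1) p.2 q.2)
      else if q.1.val = 1 then
        C (Pm (k - 2) p.2 q.2) - C (c (k - 1) / a (k - 1)) * C (Pm k p.2 q.2)
      else
        C (Pm (k - 1 - q.1.val) p.2 q.2)
    else
      -- the block rows M_Φ(λ) = M_Φ^⋆(λ) ⊗ I_n
      (if q.1.val + 1 = p.1.val then -C (a (k - 1 - p.1.val))
       else if q.1.val = p.1.val then X - C (b (k - 1 - p.1.val))
       else if q.1.val = p.1.val + 1 then -C (c (k - 1 - p.1.val))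
       else 0) * (if p.2 = q.2 then 1 else 0)

/-- The `kn × kn` real matrix `[v ⊗ I_n, B]`: first `n` columns form `v ⊗ I_n`,
the remaining `(k-1)n` columns form `B`. -/
def extCols (n k : ℕ) (v : Fin k → ℝ)
    (B : Matrix (Fin k × Fin n) (Fin (k - 1) × Fin n) ℝ) :
    Matrix (Fin k × Fin n) (Fin k × Fin n) ℝ :=
  Matrix.of fun p q =>
    if h : q.1.val = 0 then (if p.2 = q.2 then v p.1 else 0)
    else B p (⟨q.1.val - 1, by have := q.1.isLt; omega⟩, q.2)

/-- The `kn × kn` real matrix `[w^T ⊗ I_n; B]`: first `n` rows form `w^T ⊗ I_n`,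
the remaining `(k-1)n` rows form `B`. -/
def extRows (n k : ℕ) (w : Fin k → ℝ)
    (B : Matrix (Fin (k - 1) × Fin n) (Fin k × Fin n) ℝ) :
    Matrix (Fin k × Fin n) (Fin k × Fin n) ℝ :=
  Matrix.of fun p q =>
    if h : p.1.val = 0 then (if p.2 = q.2 then w q.1 else 0)
    else B (⟨p.1.val - 1, by have := p.1.isLt; omega⟩, p.2) q

/-- A real matrix viewed as a constant matrix polynomial. -/
def liftC {m m' : Type*} (A : Matrix m m' ℝ) : Matrix m m' (Polynomial ℝ) :=
  A.map C

/-- Block transpose of a matrix consisting of `n × n` blocks: block `(i,j)` of `A^𝓑`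
is block `(j,i)` of `A`. -/
def blockTr {n k1 k2 : ℕ} {R : Type*} (A : Matrix (Fin k1 × Fin n) (Fin k2 × Fin n) R) :
    Matrix (Fin k2 × Fin n) (Fin k1 × Fin n) R :=
  Matrix.of fun p q => A (q.1, p.2) (p.1, q.2)

/-- `rev_d Q(λ) = λ^d Q(1/λ)`, entrywise reversal of a matrix polynomial of degree at most `d`. -/
def revMat {m m' : Type*} (d : ℕ) (L : Matrix m m' (Polynomial ℝ)) :
    Matrix m m' (Polynomial ℝ) :=
  Matrix.of fun p q => (L p q).reflect d

/-- Evaluation of a real matrix polynomial at a complex number. -/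
def evalC {m m' : Type*} (α : ℂ) (L : Matrix m m' (Polynomial ℝ)) : Matrix m m' ℂ :=
  Matrix.of fun p q => aeval α (L p q)

/-- A matrix polynomial viewed as a matrix over the field `ℝ(λ)` of rational functions. -/
def liftRat {m m' : Type*} (L : Matrix m m' (Polynomial ℝ)) : Matrix m m' (RatFunc ℝ) :=
  L.map (algebraMap (Polynomial ℝ) (RatFunc ℝ))

/-- `v ⊗ I_n` as a `kn × n` complex matrix. -/
def vKronC (n k : ℕ) (v : Fin k → ℝ) : Matrix (Fin k × Fin n) (Fin n) ℂ :=
  Matrix.of fun p s => if p.2 = s then (v p.1 : ℂ) else 0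

/-- `v ⊗ I_n` as a `kn × n` matrix over `ℝ(λ)`. -/
def vKronRat (n k : ℕ) (v : Fin k → ℝ) : Matrix (Fin k × Fin n) (Fin n) (RatFunc ℝ) :=
  Matrix.of fun p s => if p.2 = s then RatFunc.C (v p.1) else 0

/-- The pencil `Xm λ + Ym` as a matrix polynomial. -/
def pencilPoly {m : Type*} (Xm Ym : Matrix m m ℝ) : Matrix m m (Polynomial ℝ) :=
  Matrix.of fun p q => C (Xm p q) * X + C (Ym p q)

/-- `diag(P(λ), I_{(k-1)n})` as a `kn × kn` matrix polynomial. -/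
def diagPI (n k : ℕ) (Pp : Matrix (Fin n) (Fin n) (Polynomial ℝ)) :
    Matrix (Fin k × Fin n) (Fin k × Fin n) (Polynomial ℝ) :=
  Matrix.of fun p q =>
    if p.1.val = 0 ∧ q.1.val = 0 then Pp p.2 q.2 else if p = q then 1 else 0

/-- `ℒ(λ)` is a linearization of `P(λ)`: there are `U(λ), V(λ)` with nonzero real constant
determinants such that `U(λ)ℒ(λ)V(λ) = diag(P(λ), I_{(k-1)n})`. -/
def IsLinearization (n k : ℕ)
    (L : Matrix (Fin k × Fin n) (Fin k × Fin n) (Polynomial ℝ))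
    (Pp : Matrix (Fin n) (Fin n) (Polynomial ℝ)) : Prop :=
  ∃ U V : Matrix (Fin k × Fin n) (Fin k × Fin n) (Polynomial ℝ),
    (∃ cu : ℝ, cu ≠ 0 ∧ U.det = C cu) ∧ (∃ cv : ℝ, cv ≠ 0 ∧ V.det = C cv) ∧
    U * L * V = diagPI n k Pp

/-- `ℒ(λ)` is a strong linearization of `P(λ)` (of degree `k`): it is a linearization and
`rev₁ ℒ(λ)` is a linearization of `rev_k P(λ)`. -/
def IsStrongLin (n k : ℕ)
    (L : Matrix (Fin k × Fin n) (Fin k × Fin n) (Polynomial ℝ))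
    (Pp : Matrix (Fin n) (Fin n) (Polynomial ℝ)) : Prop :=
  IsLinearization n k L Pp ∧ IsLinearization n k (revMat 1 L) (revMat k Pp)








namespace Thm15Aux

/-- Degrees and leading coefficients of the recurrence basis. -/
lemma phi_spec {a b c : ℕ → ℝ} {φ : ℕ → Polynomial ℝ}
    (ha : ∀ j, a j ≠ 0) (hφ0 : φ 0 = 1)
    (hφ1 : C (a 0) * φ 1 = (X - C (b 0)) * φ 0)
    (hφrec : ∀ j, C (a (j + 1)) * φ (j + 2) =
      (X - C (b (j + 1))) * φ (j + 1) - C (c (j + 1)) * φ j) :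
    ∀ j, (φ j).degree ≤ (j : WithBot ℕ) ∧ (φ j).coeff j ≠ 0 := by
  intro j
  induction j using Nat.twoStepInduction with
  | zero =>
    rw [hφ0]
    constructor
    · simp only [Nat.cast_zero]; exact degree_one_le
    · simp
  | one =>
    have h1 : φ 1 = C (a 0)⁻¹ * (X - C (b 0)) := by
      have h := hφ1
      rw [hφ0, mul_one] at h
      have : C (a 0)⁻¹ * (C (a 0) * φ 1) = C (a 0)⁻¹ * (X - C (b 0)) := by rw [h]
      rwa [← mul_assoc, ← C_mul, inv_mul_cancel₀ (ha 0), C_1, one_mul] at this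
    constructor
    · rw [h1]
      refine le_trans (degree_mul_le _ _) ?_
      rw [degree_X_sub_C]
      calc (C (a 0)⁻¹).degree + 1 ≤ 0 + 1 := by
            exact add_le_add_left degree_C_le 1
        _ = ((1 : ℕ) : WithBot ℕ) := by norm_num
    · rw [h1, coeff_C_mul]
      simp only [coeff_sub, coeff_X_one, coeff_C]
      norm_num
      exact ha 0
  | more j ih1 ih2 =>
    have hC : (C (a (j+1)) : ℝ[X]) ≠ 0 := by
      simpa using ha (j+1)
    have h2 : φ (j + 2) = C (a (j+1))⁻¹ *
        ((X - C (b (j + 1))) * φ (j + 1) - C (c (j + 1)) * φ j) := by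
      have h := hφrec j
      have : C (a (j+1))⁻¹ * (C (a (j+1)) * φ (j+2)) =
          C (a (j+1))⁻¹ * ((X - C (b (j + 1))) * φ (j + 1) - C (c (j + 1)) * φ j) := by rw [h]
      rwa [← mul_assoc, ← C_mul, inv_mul_cancel₀ (ha (j+1)), C_1, one_mul] at this
    have hd1 : ((X - C (b (j + 1))) * φ (j + 1)).degree ≤ ((j + 2 : ℕ) : WithBot ℕ) := by
      refine le_trans (degree_mul_le _ _) ?_
      rw [degree_X_sub_C]
      calc (1 : WithBot ℕ) + (φ (j+1)).degree ≤ 1 + ((j+1 : ℕ) : WithBot ℕ) :=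
            add_le_add_right ih2.1 1
        _ = ((j + 2 : ℕ) : WithBot ℕ) := by
            push_cast; ring
    have hd2 : (C (c (j + 1)) * φ j).degree ≤ ((j + 2 : ℕ) : WithBot ℕ) := by
      refine le_trans (degree_mul_le _ _) ?_
      calc (C (c (j+1))).degree + (φ j).degree ≤ 0 + ((j : ℕ) : WithBot ℕ) :=
            add_le_add degree_C_le ih1.1
        _ = ((j : ℕ) : WithBot ℕ) := by rw [zero_add]
        _ ≤ ((j + 2 : ℕ) : WithBot ℕ) := by
            exact_mod_cast Nat.le_add_right j 2
    constructor
    · rw [h2]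
      refine le_trans (degree_mul_le _ _) ?_
      calc (C (a (j+1))⁻¹).degree +
            ((X - C (b (j + 1))) * φ (j + 1) - C (c (j + 1)) * φ j).degree
          ≤ 0 + ((j + 2 : ℕ) : WithBot ℕ) :=
            add_le_add degree_C_le (le_trans (degree_sub_le _ _) (max_le hd1 hd2))
        _ = ((j + 2 : ℕ) : WithBot ℕ) := by rw [zero_add]
    · rw [h2, coeff_C_mul]
      have e1 : ((X - C (b (j + 1))) * φ (j + 1)).coeff (j + 2) = (φ (j+1)).coeff (j+1) := by
        rw [sub_mul, coeff_sub, coeff_X_mul, coeff_C_mul]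
        have : (φ (j+1)).coeff (j+2) = 0 := by
          apply coeff_eq_zero_of_degree_lt
          refine lt_of_le_of_lt ih2.1 ?_
          exact_mod_cast Nat.lt_succ_self (j+1)
        rw [this, mul_zero, sub_zero]
      have e2 : (C (c (j + 1)) * φ j).coeff (j + 2) = 0 := by
        rw [coeff_C_mul]
        have : (φ j).coeff (j+2) = 0 := by
          apply coeff_eq_zero_of_degree_lt
          refine lt_of_le_of_lt ih1.1 ?_
          exact_mod_cast by omega
        rw [this, mul_zero]
      rw [coeff_sub, e1, e2, sub_zero]
      exact mul_ne_zero (inv_ne_zero (ha (j+1))) ih2.2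

/-- Linear independence of a degree-graded family. -/
lemma indep_range {ψ : ℕ → Polynomial ℂ}
    (hd : ∀ j, (ψ j).degree ≤ (j : ℕ)) (hc : ∀ j, (ψ j).coeff j ≠ 0) :
    ∀ (m : ℕ) (d : ℕ → ℂ), (∑ j ∈ Finset.range m, C (d j) * ψ j) = 0 → ∀ j < m, d j = 0 := by
  intro m
  induction m with
  | zero => intro d _ j hj; omega
  | succ m ih =>
    intro d h
    have hco : (∑ j ∈ Finset.range (m+1), C (d j) * ψ j).coeff m = d m * (ψ m).coeff m := by
      rw [finset_sum_coeff, Finset.sum_range_succ]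
      have hz : ∀ j ∈ Finset.range m, (C (d j) * ψ j).coeff m = 0 := by
        intro j hj
        rw [coeff_C_mul]
        have : (ψ j).coeff m = 0 := by
          apply coeff_eq_zero_of_degree_lt
          refine lt_of_le_of_lt (hd j) ?_
          exact_mod_cast Finset.mem_range.mp hj
        rw [this, mul_zero]
      rw [Finset.sum_eq_zero hz, zero_add, coeff_C_mul]
    rw [h, coeff_zero] at hco
    have hdm : d m = 0 := by
      rcases mul_eq_zero.mp hco.symm with h' | h'
      · exact h'
      · exact absurd h' (hc m)
    have h' : (∑ j ∈ Finset.range m, C (d j) * ψ j) = 0 := by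
      rw [Finset.sum_range_succ, hdm] at h
      simpa using h
    intro j hj
    rcases Nat.lt_succ_iff_lt_or_eq.mp hj with h2 | h2
    · exact ih d h' j h2
    · rw [h2]; exact hdm

/-- Top coefficient of a product of polynomials of degree at most `k`. -/
lemma coeff_prod_top {R : Type*} [CommSemiring R] {ι : Type*} [DecidableEq ι] (k : ℕ) :
    ∀ (s : Finset ι) (f : ι → Polynomial R), (∀ i ∈ s, (f i).degree ≤ (k : ℕ)) →
      (∏ i ∈ s, f i).coeff (s.card * k) = ∏ i ∈ s, (f i).coeff k := by
  intro s
  induction s using Finset.induction_on with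
  | empty => intro f _; simp
  | @insert a s ha ih =>
    intro f hdeg
    have hdq : (∏ i ∈ s, f i).degree ≤ ((s.card * k : ℕ) : WithBot ℕ) := by
      refine le_trans (degree_prod_le _ _) ?_
      calc (∑ i ∈ s, (f i).degree) ≤ ∑ i ∈ s, ((k : ℕ) : WithBot ℕ) := by
            exact Finset.sum_le_sum (fun i hi => hdeg i (Finset.mem_insert_of_mem hi))
        _ = ((s.card * k : ℕ) : WithBot ℕ) := by
            rw [Finset.sum_const, nsmul_eq_mul]
            push_cast; ring
    rw [Finset.prod_insert ha, Finset.prod_insert ha, Finset.card_insert_of_notMem ha]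
    have hp : (f a).degree ≤ (k : ℕ) := hdeg a (Finset.mem_insert_self a s)
    have hq := ih f (fun i hi => hdeg i (Finset.mem_insert_of_mem hi))
    rw [coeff_mul]
    rw [Finset.sum_eq_single (k, s.card * k)]
    · rw [hq]
    · rintro ⟨x, y⟩ hmem hne
      have hxy : x + y = s.card * k + k := by
        have := Finset.HasAntidiagonal.mem_antidiagonal.mp hmem
        simp only at this
        rw [this]; ring
      by_cases hx : k < x
      · have : (f a).coeff x = 0 := by
          apply coeff_eq_zero_of_degree_lt
          exact lt_of_le_of_lt hp (by exact_mod_cast hx)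
        rw [this, zero_mul]
      · have hy : s.card * k < y := by
          obtain ⟨m, hm⟩ : ∃ m, s.card * k = m := ⟨_, rfl⟩
          rw [hm] at hxy ⊢
          have hne' : ¬(x = k ∧ y = m) := by
            intro ⟨h1, h2⟩; exact hne (by rw [h1, h2, ← hm])
          push_neg at hx
          omega
        have : (∏ i ∈ s, f i).coeff y = 0 := by
          apply coeff_eq_zero_of_degree_lt
          exact lt_of_le_of_lt hdq (by exact_mod_cast hy)
        rw [this, mul_zero]
    · intro hnot
      exfalso
      exact hnot (Finset.HasAntidiagonal.mem_antidiagonal.mpr (by ring))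

end Thm15Aux







namespace Thm15Aux2

/-- Compare kernel dimensions along a linear map injective on the first kernel. -/
lemma ker_finrank_le {α β : Type*} [Fintype α] [Fintype β] [DecidableEq α] [DecidableEq β]
    (A : Matrix α α ℂ) (B : Matrix β β ℂ)
    (g : (α → ℂ) →ₗ[ℂ] (β → ℂ))
    (hg : ∀ x, A.mulVec x = 0 → B.mulVec (g x) = 0)
    (hginj : ∀ x, A.mulVec x = 0 → g x = 0 → x = 0) :
    Module.finrank ℂ (LinearMap.ker A.mulVecLin) ≤
      Module.finrank ℂ (LinearMap.ker B.mulVecLin) := by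
  let f : (LinearMap.ker A.mulVecLin) →ₗ[ℂ] (LinearMap.ker B.mulVecLin) :=
    LinearMap.codRestrict _ (g.comp (LinearMap.ker A.mulVecLin).subtype)
      (fun x => by
        have hx : A.mulVec x.val = 0 := by
          have := x.2
          rwa [LinearMap.mem_ker, Matrix.mulVecLin_apply] at this
        have := hg x.val hx
        rw [LinearMap.mem_ker, Matrix.mulVecLin_apply]
        simpa using this)
  apply LinearMap.finrank_le_finrank_of_injective (f := f)
  intro x y hxy
  have hval : g x.val = g y.val := by
    have := congrArg Subtype.val hxy
    simpa [f, LinearMap.codRestrict] using this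
  have hx : A.mulVec x.val = 0 := by
    have := x.2; rwa [LinearMap.mem_ker, Matrix.mulVecLin_apply] at this
  have hy : A.mulVec y.val = 0 := by
    have := y.2; rwa [LinearMap.mem_ker, Matrix.mulVecLin_apply] at this
  have hsub : A.mulVec (x.val - y.val) = 0 := by
    rw [Matrix.mulVec_sub, hx, hy, sub_zero]
  have : x.val - y.val = 0 := by
    apply hginj _ hsub
    rw [map_sub, hval, sub_self]
  exact Subtype.ext (sub_eq_zero.mp this)

/-- The `kn × kn` matrix `diag(Pμ, I)`. -/
def Dmat (n k : ℕ) (Pμ : Matrix (Fin n) (Fin n) ℂ) :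
    Matrix (Fin k × Fin n) (Fin k × Fin n) ℂ :=
  Matrix.of fun p q => if p.1.val = 0 ∧ q.1.val = 0 then Pμ p.2 q.2 else if p = q then 1 else 0

lemma Dmat_mulVec {n k : ℕ} (hk : 0 < k) (Pμ : Matrix (Fin n) (Fin n) ℂ)
    (z : Fin k × Fin n → ℂ) :
    (Dmat n k Pμ).mulVec z = fun pp =>
      if pp.1.val = 0 then (Pμ.mulVec fun q => z (⟨0, hk⟩, q)) pp.2 else z pp := by
  funext pp
  obtain ⟨i, p⟩ := pp
  rw [Matrix.mulVec]
  simp only [dotProduct, Dmat, Matrix.of_apply]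
  rw [Fintype.sum_prod_type]
  by_cases hi : i.val = 0
  · rw [if_pos hi]
    rw [Finset.sum_eq_single (⟨0, hk⟩ : Fin k)]
    · rw [Matrix.mulVec]
      simp only [dotProduct]
      apply Finset.sum_congr rfl
      intro q _
      simp [hi]
    · intro j _ hj
      apply Finset.sum_eq_zero
      intro q _
      rw [if_neg, if_neg, zero_mul]
      · intro hEq
        have hij : i = j := congrArg Prod.fst hEq
        exact hj (by rw [← hij]; exact Fin.ext hi)
      · rintro ⟨_, hj0⟩
        exact hj (Fin.ext hj0)
    · intro h
      exact absurd (Finset.mem_univ _) h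
  · rw [if_neg hi]
    rw [Finset.sum_eq_single i]
    · rw [Finset.sum_eq_single p]
      · rw [if_neg (by tauto), if_pos rfl, one_mul]
      · intro q _ hq
        rw [if_neg (by tauto), if_neg, zero_mul]
        intro hEq
        exact hq (congrArg Prod.snd hEq).symm
      · intro h
        exact absurd (Finset.mem_univ _) h
    · intro j _ hj
      apply Finset.sum_eq_zero
      intro q _
      rw [if_neg (by rintro ⟨hi0, _⟩; exact hi hi0), if_neg, zero_mul]
      intro hEq
      exact hj (congrArg Prod.fst hEq).symm
    · intro h
      exact absurd (Finset.mem_univ _) h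

lemma final_contra {n k : ℕ} (hk : 2 ≤ k)
    (Lmu Umu Vmu : Matrix (Fin k × Fin n) (Fin k × Fin n) ℂ)
    (Pmu : Matrix (Fin n) (Fin n) ℂ)
    (hUV : Umu * Lmu * Vmu = Dmat n k Pmu)
    (hU : IsUnit Umu.det) (hV : IsUnit Vmu.det)
    (Lam : Fin k → ℂ) (xi : Fin k × Fin n → ℂ)
    (hker : Lmu.mulVec xi = 0)
    (hmem : ∀ u : Fin n → ℂ, Pmu.mulVec u = 0 →
      Lmu.mulVec (fun pp => Lam pp.1 * u pp.2) = 0)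
    (hindep : ∀ (u : Fin n → ℂ) (cc : ℂ), Pmu.mulVec u = 0 →
        (fun pp : Fin k × Fin n => Lam pp.1 * u pp.2 + cc * xi pp) = 0 → u = 0 ∧ cc = 0) :
    False := by
  have hk0 : 0 < k := by omega
  -- dim ker L = dim ker D
  have eLD : Module.finrank ℂ (LinearMap.ker Lmu.mulVecLin) =
      Module.finrank ℂ (LinearMap.ker (Dmat n k Pmu).mulVecLin) := by
    apply le_antisymm
    · apply ker_finrank_le Lmu (Dmat n k Pmu) (Vmu⁻¹).mulVecLin
      · intro x hx
        rw [Matrix.mulVecLin_apply, ← hUV, Matrix.mulVec_mulVec]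
        have h1 : Umu * Lmu * Vmu * Vmu⁻¹ = Umu * Lmu := by
          rw [mul_assoc (Umu * Lmu), Matrix.mul_nonsing_inv _ hV, mul_one]
        rw [h1, ← Matrix.mulVec_mulVec, hx, Matrix.mulVec_zero]
      · intro x _ hx0
        rw [Matrix.mulVecLin_apply] at hx0
        have : Vmu.mulVec (Vmu⁻¹.mulVec x) = Vmu.mulVec 0 := by rw [hx0]
        rwa [Matrix.mulVec_mulVec, Matrix.mul_nonsing_inv _ hV, Matrix.one_mulVec,
          Matrix.mulVec_zero] at this
    · apply ker_finrank_le (Dmat n k Pmu) Lmu Vmu.mulVecLin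
      · intro z hz
        rw [← hUV] at hz
        rw [Matrix.mulVecLin_apply]
        have h2 : Umu.mulVec (Lmu.mulVec (Vmu.mulVec z)) = 0 := by
          rw [Matrix.mulVec_mulVec, Matrix.mulVec_mulVec]
          exact hz
        have : Umu⁻¹.mulVec (Umu.mulVec (Lmu.mulVec (Vmu.mulVec z))) = 0 := by
          rw [h2, Matrix.mulVec_zero]
        rwa [Matrix.mulVec_mulVec, Matrix.nonsing_inv_mul _ hU, Matrix.one_mulVec] at this
      · intro z _ hz0
        rw [Matrix.mulVecLin_apply] at hz0
        have : Vmu⁻¹.mulVec (Vmu.mulVec z) = Vmu⁻¹.mulVec 0 := by rw [hz0]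
        rwa [Matrix.mulVec_mulVec, Matrix.nonsing_inv_mul _ hV, Matrix.one_mulVec,
          Matrix.mulVec_zero] at this
  -- dim ker D = dim ker P
  have eDP : Module.finrank ℂ (LinearMap.ker (Dmat n k Pmu).mulVecLin) =
      Module.finrank ℂ (LinearMap.ker Pmu.mulVecLin) := by
    apply le_antisymm
    · apply ker_finrank_le (Dmat n k Pmu) Pmu
        (LinearMap.funLeft ℂ ℂ (fun q : Fin n => ((⟨0, hk0⟩ : Fin k), q)))
      · intro z hz
        rw [Dmat_mulVec hk0] at hz
        funext p
        have := congrFun hz (⟨0, hk0⟩, p)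
        simp at this; exact this
      · intro z hz hz0
        rw [Dmat_mulVec hk0] at hz
        funext pp
        obtain ⟨i, p⟩ := pp
        by_cases hi : i.val = 0
        · have hii : i = ⟨0, hk0⟩ := Fin.ext hi
          rw [hii]
          exact congrFun hz0 p
        · have := congrFun hz (i, p)
          rw [if_neg hi] at this
          exact this
    · apply ker_finrank_le Pmu (Dmat n k Pmu)
        { toFun := fun u => fun pp => if pp.1 = (⟨0, hk0⟩ : Fin k) then u pp.2 else 0,
          map_add' := by
            intro u u'
            funext pp
            by_cases h : pp.1 = (⟨0, hk0⟩ : Fin k) <;> simp [h],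
          map_smul' := by
            intro r u
            funext pp
            by_cases h : pp.1 = (⟨0, hk0⟩ : Fin k) <;> simp [h] }
      · intro u hu
        rw [Dmat_mulVec hk0]
        funext pp
        obtain ⟨i, p⟩ := pp
        simp only [LinearMap.coe_mk, AddHom.coe_mk, Pi.zero_apply]
        by_cases hi : i.val = 0
        · rw [if_pos hi]
          simpa using congrFun hu p
        · rw [if_neg hi, if_neg (fun h => hi (by rw [(h : i = ⟨0, hk0⟩)]))]
      · intro u _ hu0
        funext q
        have := congrFun hu0 ((⟨0, hk0⟩ : Fin k), q)
        simpa using this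
  -- the injection (ker P) × ℂ → ker L
  let KP := LinearMap.ker Pmu.mulVecLin
  let KL := LinearMap.ker Lmu.mulVecLin
  have hmemF : ∀ uc : ↥KP × ℂ,
      (fun pp : Fin k × Fin n => Lam pp.1 * (uc.1 : Fin n → ℂ) pp.2 + uc.2 * xi pp) ∈ KL := by
    rintro ⟨u, cc⟩
    have hu : Pmu.mulVec u.val = 0 := by
      have := u.2; rwa [LinearMap.mem_ker, Matrix.mulVecLin_apply] at this
    rw [LinearMap.mem_ker, Matrix.mulVecLin_apply]
    have : (fun pp : Fin k × Fin n => Lam pp.1 * (u : Fin n → ℂ) pp.2 + cc * xi pp) =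
        (fun pp : Fin k × Fin n => Lam pp.1 * (u : Fin n → ℂ) pp.2) + cc • xi := by
      funext pp; simp [smul_eq_mul]
    rw [this, Matrix.mulVec_add, Matrix.mulVec_smul, hmem u.val hu, hker, smul_zero, add_zero]
  let F0 : (↥KP × ℂ) →ₗ[ℂ] (Fin k × Fin n → ℂ) :=
    { toFun := fun uc => fun pp => Lam pp.1 * (uc.1 : Fin n → ℂ) pp.2 + uc.2 * xi pp,
      map_add' := by
        rintro ⟨u, cc⟩ ⟨u', cc'⟩
        funext pp
        simp only [Prod.fst_add, Prod.snd_add, Submodule.coe_add, Pi.add_apply]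
        ring,
      map_smul' := by
        rintro r ⟨u, cc⟩
        funext pp
        simp only [Prod.smul_fst, Prod.smul_snd, SetLike.val_smul, Pi.smul_apply,
          smul_eq_mul, RingHom.id_apply]
        ring }
  let F : (↥KP × ℂ) →ₗ[ℂ] ↥KL := LinearMap.codRestrict KL F0 hmemF
  have hFinj : Function.Injective F := by
    rw [← LinearMap.ker_eq_bot, LinearMap.ker_eq_bot']
    intro uc hzero
    obtain ⟨u, cc⟩ := uc
    have hval : F0 (u, cc) = 0 := by
      have := congrArg Subtype.val hzero
      simpa [F, LinearMap.codRestrict] using this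
    have hu : Pmu.mulVec u.val = 0 := by
      have := u.2; rwa [LinearMap.mem_ker, Matrix.mulVecLin_apply] at this
    have h2 := hindep u.val cc hu hval
    have : u = 0 := Subtype.ext h2.1
    rw [this, h2.2]
    rfl
  have hle : Module.finrank ℂ (↥KP × ℂ) ≤ Module.finrank ℂ ↥KL :=
    LinearMap.finrank_le_finrank_of_injective hFinj
  rw [Module.finrank_prod, Module.finrank_self] at hle
  have : Module.finrank ℂ ↥KL = Module.finrank ℂ ↥KP := by
    rw [show KL = LinearMap.ker Lmu.mulVecLin from rfl, eLD, eDP]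
  omega

end Thm15Aux2






namespace Thm15

/-- evaluation exchanges with `mulVec` against a constant vector -/
lemma eval_mulVec {A B : Type*} [Fintype B] (M : Matrix A B (Polynomial ℂ)) (x : B → ℂ)
    (μ : ℂ) (a : A) :
    Polynomial.eval μ ((M.mulVec fun b => Polynomial.C (x b)) a) =
      ((M.map (Polynomial.eval μ)).mulVec x) a := by
  simp only [Matrix.mulVec, dotProduct, Matrix.map_apply]
  rw [Polynomial.eval_finset_sum]
  apply Finset.sum_congr rfl
  intro b _
  rw [eval_mul, eval_C]

/-- a ring hom map exchanges with `mulVec` -/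
lemma map_mulVec {A B : Type*} [Fintype B] {R S : Type*} [CommSemiring R] [CommSemiring S]
    (f : R →+* S) (M : Matrix A B R) (x : B → R) (a : A) :
    ((M.map ⇑f).mulVec fun b => f (x b)) a = f ((M.mulVec x) a) := by
  simp only [Matrix.mulVec, dotProduct, Matrix.map_apply]
  rw [map_sum]
  apply Finset.sum_congr rfl
  intro b _
  exact (_root_.map_mul f _ _).symm

end Thm15


namespace Thm15

theorem main_core
    (n k : ℕ) (hn : 0 < n) (hk : 2 ≤ k)
    (a b c : ℕ → ℝ) (ha : ∀ j, a j ≠ 0)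
    (φ : ℕ → Polynomial ℝ) (hφ0 : φ 0 = 1)
    (hφ1 : C (a 0) * φ 1 = (X - C (b 0)) * φ 0)
    (hφrec : ∀ j, C (a (j + 1)) * φ (j + 2) =
      (X - C (b (j + 1))) * φ (j + 1) - C (c (j + 1)) * φ j)
    (Pm : ℕ → Matrix (Fin n) (Fin n) ℝ)
    (hsing : (matP n k φ Pm).det = 0)
    (L : Matrix (Fin k × Fin n) (Fin k × Fin n) (Polynomial ℝ)) (hL : IsPencil L)
    (v : Fin k → ℝ) (hA1 : Ansatz1 n k φ Pm L v)
    (w : Fin k → ℝ) (hA2 : Ansatz2 n k φ Pm L w) :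
    ¬ IsLinearization n k L (matP n k φ Pm) := by
  rintro ⟨U, V, ⟨cu, hcu, hdetU⟩, ⟨cv, hcv, hdetV⟩, hUV⟩
  have hk0 : 0 < k := by omega
  have hspec := Thm15Aux.phi_spec ha hφ0 hφ1 hφrec
  set ψ : Polynomial ℝ →+* Polynomial ℂ := Polynomial.mapRingHom (algebraMap ℝ ℂ) with hψdef
  set φc : ℕ → Polynomial ℂ := fun j => ψ (φ j) with hφcdef
  have hφcmap : ∀ j, φc j = (φ j).map (algebraMap ℝ ℂ) := fun j => rfl
  have hdc : ∀ j, (φc j).degree ≤ (j : WithBot ℕ) := by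
    intro j
    rw [hφcmap]
    exact le_trans degree_map_le (hspec j).1
  have hccoeff : ∀ j, (φc j).coeff j = ((φ j).coeff j : ℂ) := by
    intro j
    rw [hφcmap, Polynomial.coeff_map]
    rfl
  have hcc : ∀ j, (φc j).coeff j ≠ 0 := by
    intro j
    rw [hccoeff]
    exact_mod_cast (hspec j).2
  have hφc0 : φc 0 = 1 := by rw [hφcmap, hφ0, Polynomial.map_one]
  have hφc1 : Polynomial.C ((a 0 : ℂ)) * φc 1 = X - Polynomial.C ((b 0 : ℂ)) := by
    have h := congrArg (⇑ψ) hφ1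
    rw [_root_.map_mul, _root_.map_mul, map_sub] at h
    rw [hψdef] at h
    simp only [Polynomial.coe_mapRingHom, Polynomial.map_C, Polynomial.map_X] at h
    rw [← hφcmap, ← hφcmap, hφc0, mul_one] at h
    simpa using h
  -- linear independence
  have indep : ∀ d : Fin k → ℂ,
      (∑ i : Fin k, Polynomial.C (d i) * φc (k - 1 - (i : ℕ))) = 0 → ∀ i, d i = 0 := by
    intro d hsum i
    set e : ℕ → ℂ := fun m => if hm : m < k then d ⟨k - 1 - m, by omega⟩ else 0 with hedef
    have hsum' : (∑ j ∈ Finset.range k, Polynomial.C (e j) * φc j) = 0 := by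
      rw [← Fin.sum_univ_eq_sum_range (fun m => Polynomial.C (e m) * φc m) k]
      rw [← hsum]
      apply Fintype.sum_equiv (Fin.revPerm)
      intro x
      have hx := x.isLt
      have h1 : (Fin.revPerm x : Fin k) = ⟨k - 1 - (x : ℕ), by omega⟩ := by
        apply Fin.ext
        simp only [Fin.revPerm_apply, Fin.val_rev]
        omega
      rw [h1]
      simp only []
      congr 1
      · simp only [hedef]
        rw [dif_pos hx]
      · congr 1
        show (x : ℕ) = k - 1 - (k - 1 - (x : ℕ))
        omega
    have hres := Thm15Aux.indep_range hdc hcc k e hsum' (k - 1 - (i : ℕ)) (by omega)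
    simp only [hedef] at hres
    rw [dif_pos (by omega : k - 1 - (i : ℕ) < k)] at hres
    have hfin : (⟨k - 1 - (k - 1 - (i : ℕ)), by omega⟩ : Fin k) = i := by
      apply Fin.ext
      show k - 1 - (k - 1 - (i : ℕ)) = (i : ℕ)
      have := i.isLt
      omega
    rwa [hfin] at hres
  set Pp := matP n k φ Pm with hPpdef
  set Lc : Matrix (Fin k × Fin n) (Fin k × Fin n) (Polynomial ℂ) := L.map ⇑ψ with hLcdef
  set Pc : Matrix (Fin n) (Fin n) (Polynomial ℂ) := Pp.map ⇑ψ with hPcdef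
  set Φc : Matrix (Fin k × Fin n) (Fin n) (Polynomial ℂ) := (PhiMat n k φ).map ⇑ψ with hΦcdef
  have hψC : ∀ r : ℝ, ψ (Polynomial.C r) = Polynomial.C ((r : ℂ)) := by
    intro r
    rw [hψdef]
    simp
  have hPcapp : ∀ (s t : Fin n), Pc s t = ψ (Pp s t) := fun s t => rfl
  have hΦcapp : ∀ (p : Fin k × Fin n) (s : Fin n),
      Φc p s = if p.2 = s then φc (k - 1 - (p.1 : ℕ)) else 0 := by
    intro p s
    rw [hΦcdef, Matrix.map_apply, PhiMat, Matrix.of_apply, apply_ite ⇑ψ, map_zero]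
  have hA1c : Lc * Φc = (vKron n k v Pp).map ⇑ψ := by
    rw [hLcdef, hΦcdef, ← Matrix.map_mul, hA1]
  have hA2c : Φcᵀ * Lc = (vKronRow n k w Pp).map ⇑ψ := by
    rw [hLcdef, hΦcdef, ← Matrix.transpose_map, ← Matrix.map_mul, hA2]
  have hdegLc : ∀ p q, (Lc p q).degree ≤ 1 := by
    intro p q
    rw [hLcdef, Matrix.map_apply]
    exact le_trans degree_map_le (hL p q)
  -- row identity from Ansatz1, complexified
  have hrow : ∀ (p : Fin k × Fin n) (s : Fin n),
      (∑ j : Fin k, Lc p (j, s) * φc (k - 1 - (j : ℕ))) =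
        Polynomial.C ((v p.1 : ℂ)) * Pc p.2 s := by
    intro p s
    have h := congrFun (congrFun hA1c p) s
    rw [Matrix.mul_apply] at h
    rw [Fintype.sum_prod_type] at h
    have hL2 : ∀ j : Fin k, (∑ t : Fin n, Lc p (j, t) * Φc (j, t) s) =
        Lc p (j, s) * φc (k - 1 - (j : ℕ)) := by
      intro j
      rw [Finset.sum_eq_single s]
      · rw [hΦcapp, if_pos rfl]
      · intro t _ ht
        rw [hΦcapp, if_neg ht, mul_zero]
      · intro hmem; exact absurd (Finset.mem_univ _) hmem
    rw [Finset.sum_congr rfl (fun j _ => hL2 j)] at h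
    rw [h, Matrix.map_apply]
    show ψ (Polynomial.C (v p.1) * Pp p.2 s) = _
    rw [_root_.map_mul, hψC, ← hPcapp]
  -- the key step: the structured combination of any `ζ` built from a constant vector vanishes
  have hstep : ∀ ξ : Fin k × Fin n → ℂ,
      (∀ t, (∑ j : Fin k, (w j : ℂ) * ξ (j, t)) = 0) →
      ∀ s : Fin n, (∑ i : Fin k,
        φc (k - 1 - (i : ℕ)) * (Lc.mulVec fun q => Polynomial.C (ξ q)) (i, s)) = 0 := by
    intro ξ hw s
    have hmv := congrFun (congrArg (fun M => M.mulVec fun q => Polynomial.C (ξ q)) hA2c) s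
    rw [← Matrix.mulVec_mulVec] at hmv
    have hLHS : (Φcᵀ.mulVec (Lc.mulVec fun q => Polynomial.C (ξ q))) s =
        ∑ i : Fin k, φc (k - 1 - (i : ℕ)) * (Lc.mulVec fun q => Polynomial.C (ξ q)) (i, s) := by
      rw [Matrix.mulVec]
      simp only [dotProduct, Matrix.transpose_apply]
      rw [Fintype.sum_prod_type]
      apply Finset.sum_congr rfl
      intro i _
      rw [Finset.sum_eq_single s]
      · rw [hΦcapp, if_pos rfl]
      · intro t _ ht
        rw [hΦcapp, if_neg ht, zero_mul]
      · intro hmem; exact absurd (Finset.mem_univ _) hmem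
    have hRHS : (((vKronRow n k w Pp).map ⇑ψ).mulVec fun q => Polynomial.C (ξ q)) s = 0 := by
      rw [Matrix.mulVec]
      simp only [dotProduct, Matrix.map_apply, vKronRow, Matrix.of_apply]
      rw [Fintype.sum_prod_type]
      rw [Finset.sum_comm]
      apply Finset.sum_eq_zero
      intro t _
      have hterm : ∀ j : Fin k, ψ (Polynomial.C (w j) * Pp s (j, t).2) * Polynomial.C (ξ (j, t))
          = Pc s t * (Polynomial.C ((w j : ℂ)) * Polynomial.C (ξ (j, t))) := by
        intro j
        rw [_root_.map_mul, hψC, ← hPcapp]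
        ring
      rw [Finset.sum_congr rfl (fun j _ => hterm j)]
      rw [← Finset.mul_sum]
      have : (∑ j : Fin k, Polynomial.C ((w j : ℂ)) * Polynomial.C (ξ (j, t))) =
          Polynomial.C (∑ j : Fin k, (w j : ℂ) * ξ (j, t)) := by
        rw [map_sum]
        apply Finset.sum_congr rfl
        intro j _
        rw [_root_.map_mul]
      rw [this, hw t, map_zero, mul_zero]
    rw [hLHS, hRHS] at hmv
    exact hmv
  -- pointwise Ansatz1 : kernel vectors at any evaluation point
  have hpoint : ∀ (μ : ℂ) (u : Fin n → ℂ),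
      (Pc.map (Polynomial.eval μ)).mulVec u = 0 →
      (Lc.map (Polynomial.eval μ)).mulVec
        (fun pp : Fin k × Fin n => Polynomial.eval μ (φc (k - 1 - (pp.1 : ℕ))) * u pp.2) = 0 := by
    intro μ u hu
    have hmapmul : (Lc.map (Polynomial.eval μ)) * (Φc.map (Polynomial.eval μ)) =
        ((vKron n k v Pp).map ⇑ψ).map (Polynomial.eval μ) := by
      rw [← Polynomial.coe_evalRingHom, ← Matrix.map_mul, hA1c]
    have hΦu : (Φc.map (Polynomial.eval μ)).mulVec u =
        fun pp : Fin k × Fin n => Polynomial.eval μ (φc (k - 1 - (pp.1 : ℕ))) * u pp.2 := by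
      funext pp
      rw [Matrix.mulVec]
      simp only [dotProduct, Matrix.map_apply]
      rw [Finset.sum_eq_single pp.2]
      · rw [hΦcapp, if_pos rfl]
      · intro t _ ht
        rw [hΦcapp, if_neg (Ne.symm ht), Polynomial.eval_zero, zero_mul]
      · intro hmem; exact absurd (Finset.mem_univ _) hmem
    have hKvu : (((vKron n k v Pp).map ⇑ψ).map (Polynomial.eval μ)).mulVec u = 0 := by
      funext pp
      rw [Matrix.mulVec]
      simp only [dotProduct, Matrix.map_apply, vKron, Matrix.of_apply]
      have hterm : ∀ s : Fin n, Polynomial.eval μ (ψ (Polynomial.C (v pp.1) * Pp pp.2 s)) * u s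
          = (v pp.1 : ℂ) * (Polynomial.eval μ (Pc pp.2 s) * u s) := by
        intro s
        rw [_root_.map_mul, hψC, ← hPcapp, Polynomial.eval_mul, Polynomial.eval_C]
        ring
      rw [Finset.sum_congr rfl (fun s _ => hterm s), ← Finset.mul_sum]
      have hz : (∑ s : Fin n, Polynomial.eval μ (Pc pp.2 s) * u s) = 0 := by
        have := congrFun hu pp.2
        rw [Matrix.mulVec] at this
        simpa [dotProduct, Matrix.map_apply] using this
      rw [hz, mul_zero]
      rfl
    rw [← hΦu, Matrix.mulVec_mulVec, hmapmul, hKvu]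
  -- the wrapper: a global constant kernel vector ξ plus independence at μ yields False
  have hdetmap : ∀ (M : Matrix (Fin k × Fin n) (Fin k × Fin n) (Polynomial ℝ)) (μ : ℂ),
      ((M.map ⇑ψ).map (Polynomial.eval μ)).det = Polynomial.eval μ (ψ M.det) := by
    intro M μ
    rw [← Polynomial.coe_evalRingHom, ← RingHom.mapMatrix_apply, ← RingHom.map_det,
      ← RingHom.mapMatrix_apply, ← RingHom.map_det]
  have KEY : ∀ (μ : ℂ) (ξ : Fin k × Fin n → ℂ),
      (Lc.mulVec fun q => Polynomial.C (ξ q)) = 0 →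
      (∀ (u : Fin n → ℂ) (cc : ℂ), (Pc.map (Polynomial.eval μ)).mulVec u = 0 →
        (fun pp : Fin k × Fin n =>
            Polynomial.eval μ (φc (k - 1 - (pp.1 : ℕ))) * u pp.2 + cc * ξ pp) = 0 →
        u = 0 ∧ cc = 0) →
      False := by
    intro μ ξ hζ0 hindep
    have h1 : (U.map ⇑ψ) * Lc * (V.map ⇑ψ) = (diagPI n k Pp).map ⇑ψ := by
      rw [hLcdef, ← Matrix.map_mul, ← Matrix.map_mul, hUV]
    have h2 : ((U.map ⇑ψ).map (Polynomial.eval μ)) * (Lc.map (Polynomial.eval μ)) *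
        ((V.map ⇑ψ).map (Polynomial.eval μ)) = ((diagPI n k Pp).map ⇑ψ).map (Polynomial.eval μ) := by
      rw [← Polynomial.coe_evalRingHom, ← Matrix.map_mul, ← Matrix.map_mul, h1]
    have hD : ((diagPI n k Pp).map ⇑ψ).map (Polynomial.eval μ) =
        Thm15Aux2.Dmat n k (Pc.map (Polynomial.eval μ)) := by
      funext pp qq
      rw [Matrix.map_apply, Matrix.map_apply, diagPI, Matrix.of_apply,
        Thm15Aux2.Dmat, Matrix.of_apply]
      by_cases hc : pp.1.val = 0 ∧ qq.1.val = 0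
      · rw [if_pos hc, if_pos hc, Matrix.map_apply, hPcapp]
      · rw [if_neg hc, if_neg hc]
        by_cases hpq : pp = qq
        · rw [if_pos hpq, if_pos hpq]
          simp
        · rw [if_neg hpq, if_neg hpq]
          simp
    have hUdet : IsUnit (((U.map ⇑ψ).map (Polynomial.eval μ))).det := by
      rw [hdetmap, hdetU, hψC, Polynomial.eval_C]
      exact isUnit_iff_ne_zero.mpr (by exact_mod_cast hcu)
    have hVdet : IsUnit (((V.map ⇑ψ).map (Polynomial.eval μ))).det := by
      rw [hdetmap, hdetV, hψC, Polynomial.eval_C]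
      exact isUnit_iff_ne_zero.mpr (by exact_mod_cast hcv)
    have hker : (Lc.map (Polynomial.eval μ)).mulVec ξ = 0 := by
      funext pp
      have := Thm15.eval_mulVec Lc ξ μ pp
      rw [← this, hζ0]
      simp
    exact Thm15Aux2.final_contra hk (Lc.map (Polynomial.eval μ))
      ((U.map ⇑ψ).map (Polynomial.eval μ)) ((V.map ⇑ψ).map (Polynomial.eval μ))
      (Pc.map (Polynomial.eval μ)) (h2.trans hD) hUdet hVdet
      (fun i => Polynomial.eval μ (φc (k - 1 - (i : ℕ)))) ξ hker
      (fun u hu => hpoint μ u hu) hindep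
  -- `ζ` has degree ≤ 1 entries, for any constant vector ξ
  have hζdeg : ∀ (ξ : Fin k × Fin n → ℂ) (pp : Fin k × Fin n),
      ((Lc.mulVec fun q => Polynomial.C (ξ q)) pp).degree ≤ 1 := by
    intro ξ pp
    rw [Matrix.mulVec]
    simp only [dotProduct]
    refine le_trans (Polynomial.degree_sum_le _ _) ?_
    apply Finset.sup_le
    intro q _
    refine le_trans (degree_mul_le _ _) ?_
    calc (Lc pp q).degree + (Polynomial.C (ξ q)).degree ≤ 1 + 0 :=
          add_le_add (hdegLc pp q) degree_C_le
      _ = 1 := by norm_num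
  -- the evaluation of det P at any point vanishes
  have hPdet0 : ∀ μ : ℂ, ((Pc.map (Polynomial.eval μ))).det = 0 := by
    intro μ
    have : ((Pc.map (Polynomial.eval μ))).det = Polynomial.eval μ (ψ Pp.det) := by
      rw [hPcdef, ← Polynomial.coe_evalRingHom, ← RingHom.mapMatrix_apply, ← RingHom.map_det,
        ← RingHom.mapMatrix_apply, ← RingHom.map_det]
    rw [this, hsing]
    simp
  -- the coefficient-k identity for rows of Ansatz1 (used in the w₁ = 0 case)
  have hφck : ∀ j, ∀ m, j < m → (φc j).coeff m = 0 := by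
    intro j m hjm
    apply Polynomial.coeff_eq_zero_of_degree_lt
    exact lt_of_le_of_lt (hdc j) (by exact_mod_cast hjm)
  by_cases hw0 : w ⟨0, hk0⟩ = 0
  · -- the "infinite eigenvalue" case : w₁ = 0, use a kernel vector of the leading coefficient
    have hPdeg : ∀ r s : Fin n, (Pp r s).degree ≤ (k : WithBot ℕ) := by
      intro r s
      rw [hPpdef]
      simp only [matP, Matrix.of_apply]
      refine le_trans (Polynomial.degree_sum_le _ _) ?_
      apply Finset.sup_le
      intro i hi
      have hik : i ≤ k := by
        have := Finset.mem_range.mp hi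
        omega
      refine le_trans (degree_mul_le _ _) ?_
      calc (Polynomial.C (Pm i r s)).degree + (φ i).degree ≤ 0 + ((i : ℕ) : WithBot ℕ) :=
            add_le_add degree_C_le (hspec i).1
        _ = ((i : ℕ) : WithBot ℕ) := by rw [zero_add]
        _ ≤ ((k : ℕ) : WithBot ℕ) := by exact_mod_cast hik
    have hφkcoeff : ∀ i, i < k → (φ i).coeff k = 0 := fun i hik =>
      Polynomial.coeff_eq_zero_of_degree_lt (lt_of_le_of_lt (hspec i).1 (by exact_mod_cast hik))
    have hPcoeffk : ∀ r s : Fin n, (Pp r s).coeff k = Pm k r s * (φ k).coeff k := by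
      intro r s
      rw [hPpdef]
      simp only [matP, Matrix.of_apply]
      rw [Polynomial.finset_sum_coeff, Finset.sum_range_succ]
      have hz : ∀ i ∈ Finset.range k, (Polynomial.C (Pm i r s) * φ i).coeff k = 0 := by
        intro i hi
        rw [Polynomial.coeff_C_mul, hφkcoeff i (Finset.mem_range.mp hi), mul_zero]
      rw [Finset.sum_eq_zero hz, zero_add, Polynomial.coeff_C_mul]
    have hdetPmk : (Pm k).det = 0 := by
      have hterm : ∀ σ : Equiv.Perm (Fin n),
          ((Equiv.Perm.sign σ) • ∏ i : Fin n, Pp (σ i) i).coeff (Fintype.card (Fin n) * k) =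
            ((φ k).coeff k) ^ (Fintype.card (Fin n)) *
              ((Equiv.Perm.sign σ) • ∏ i : Fin n, (Pm k) (σ i) i) := by
        intro σ
        have e1 : (∏ i : Fin n, Pp (σ i) i).coeff (Fintype.card (Fin n) * k) =
            ∏ i : Fin n, (Pp (σ i) i).coeff k := by
          have hp := Thm15Aux.coeff_prod_top k Finset.univ (fun i => Pp (σ i) i)
            (fun i _ => hPdeg (σ i) i)
          rw [Finset.card_univ] at hp
          exact hp
        have e2 : (∏ i : Fin n, (Pp (σ i) i).coeff k) =
            ((φ k).coeff k) ^ (Fintype.card (Fin n)) * ∏ i : Fin n, (Pm k) (σ i) i := by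
          rw [Finset.prod_congr rfl (fun i _ => hPcoeffk (σ i) i), Finset.prod_mul_distrib,
            Finset.prod_const, Finset.card_univ, mul_comm]
        rw [Polynomial.coeff_smul, e1, e2]
        exact (mul_smul_comm _ _ _).symm
      have hc0 : (Pp.det).coeff (Fintype.card (Fin n) * k) =
          ((φ k).coeff k) ^ (Fintype.card (Fin n)) * (Pm k).det := by
        rw [Matrix.det_apply, Polynomial.finset_sum_coeff]
        rw [Finset.sum_congr rfl (fun σ _ => hterm σ), ← Finset.mul_sum, ← Matrix.det_apply]
      rw [hsing, Polynomial.coeff_zero] at hc0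
      have hl : ((φ k).coeff k) ^ (Fintype.card (Fin n)) ≠ 0 := pow_ne_zero _ (hspec k).2
      rcases mul_eq_zero.mp hc0.symm with h' | h'
      · exact absurd h' hl
      · exact h'
    obtain ⟨ur, hurne, hur⟩ := Matrix.exists_mulVec_eq_zero_iff.mpr hdetPmk
    set ξ : Fin k × Fin n → ℂ :=
      fun pp => if (pp.1 : ℕ) = 0 then ((ur pp.2 : ℝ) : ℂ) else 0 with hξdef
    have hxsum : ∀ r : Fin n, (∑ s : Fin n, ((Pm k r s : ℝ) : ℂ) * ((ur s : ℝ) : ℂ)) = 0 := by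
      intro r
      have hreal : (∑ s : Fin n, Pm k r s * ur s) = 0 := by
        have := congrFun hur r
        rw [Matrix.mulVec] at this
        simpa [dotProduct] using this
      exact_mod_cast congrArg (fun x : ℝ => (x : ℂ)) hreal
    have hζsimp : ∀ pp : Fin k × Fin n, (Lc.mulVec fun q => Polynomial.C (ξ q)) pp =
        ∑ t : Fin n, Lc pp (⟨0, hk0⟩, t) * Polynomial.C ((ur t : ℂ)) := by
      intro pp
      rw [Matrix.mulVec]
      simp only [dotProduct]
      rw [Fintype.sum_prod_type]
      rw [Finset.sum_eq_single (⟨0, hk0⟩ : Fin k)]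
      · apply Finset.sum_congr rfl
        intro t _
        rw [hξdef]
        simp only []
        simp
      · intro j _ hj
        apply Finset.sum_eq_zero
        intro t _
        rw [hξdef]
        simp only []
        rw [if_neg (fun h0 => hj (Fin.ext h0)), map_zero, mul_zero]
      · intro hmem; exact absurd (Finset.mem_univ _) hmem
    have hXmul : (X * φc (k-1)).coeff k = (φc (k-1)).coeff (k-1) := by
      obtain ⟨m, hm⟩ : ∃ m, k = m + 1 := ⟨k - 1, by omega⟩
      subst hm
      simp only [Nat.add_sub_cancel]
      exact Polynomial.coeff_X_mul _ _
    have hX0 : ∀ (pp : Fin k × Fin n) (s : Fin n),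
        (Lc pp (⟨0, hk0⟩, s)).coeff 1 * ((φc (k-1)).coeff (k-1)) =
          (v pp.1 : ℂ) * (((Pm k pp.2 s : ℝ) : ℂ) * ((φc k).coeff k)) := by
      intro pp s
      have h := congrArg (fun p : Polynomial ℂ => p.coeff k) (hrow pp s)
      rw [Polynomial.finset_sum_coeff] at h
      have hzz : ∀ j : Fin k, j ∈ Finset.univ → j ≠ ⟨0, hk0⟩ →
          (Lc pp (j, s) * φc (k - 1 - (j:ℕ))).coeff k = 0 := by
        intro j _ hj
        apply Polynomial.coeff_eq_zero_of_degree_lt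
        have hj1 : 1 ≤ (j : ℕ) := by
          by_contra hcon
          push_neg at hcon
          exact hj (Fin.ext (by show (j:ℕ) = 0; omega))
        refine lt_of_le_of_lt (degree_mul_le _ _) ?_
        calc (Lc pp (j,s)).degree + (φc (k - 1 - (j:ℕ))).degree
            ≤ 1 + ((k - 1 - (j:ℕ) : ℕ) : WithBot ℕ) := add_le_add (hdegLc _ _) (hdc _)
          _ ≤ ((k - 1 : ℕ) : WithBot ℕ) := by
              have h9 : 1 + (k - 1 - (j:ℕ)) ≤ k - 1 := by omega
              exact_mod_cast h9
          _ < ((k : ℕ) : WithBot ℕ) := by exact_mod_cast (by omega : k - 1 < k)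
      rw [Finset.sum_eq_single (⟨0, hk0⟩ : Fin k) hzz
        (fun hmem => absurd (Finset.mem_univ _) hmem)] at h
      have hidx0 : k - 1 - ((⟨0, hk0⟩ : Fin k) : ℕ) = k - 1 := by simp
      rw [hidx0] at h
      have he := Polynomial.eq_X_add_C_of_degree_le_one (hdegLc pp (⟨0, hk0⟩, s))
      rw [he, add_mul, Polynomial.coeff_add, mul_assoc, Polynomial.coeff_C_mul,
        Polynomial.coeff_C_mul, hXmul, hφck (k-1) k (by omega), mul_zero, add_zero] at h
      rw [Polynomial.coeff_C_mul] at h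
      have hPck : (Pc pp.2 s).coeff k = ((Pm k pp.2 s : ℝ) : ℂ) * ((φc k).coeff k) := by
        rw [hPcapp]
        have hcm : (ψ (Pp pp.2 s)).coeff k = (((Pp pp.2 s).coeff k : ℝ) : ℂ) := by
          rw [hψdef]
          simp [Polynomial.coeff_map]
        rw [hcm, hPcoeffk, hccoeff k]
        push_cast
        ring
      rw [hPck] at h
      exact h
    have hcoeff1 : ∀ pp, ((Lc.mulVec fun q => Polynomial.C (ξ q)) pp).coeff 1 = 0 := by
      intro pp
      rw [hζsimp pp, Polynomial.finset_sum_coeff]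
      rw [Finset.sum_congr rfl (fun t _ => Polynomial.coeff_mul_C _ _ _)]
      have hlc : ((φc (k-1)).coeff (k-1)) ≠ 0 := hcc (k-1)
      have hmul : (∑ t : Fin n, (Lc pp (⟨0,hk0⟩, t)).coeff 1 * ((ur t : ℝ) : ℂ)) *
          ((φc (k-1)).coeff (k-1)) = 0 := by
        rw [Finset.sum_mul]
        have hterm2 : ∀ t : Fin n, (Lc pp (⟨0,hk0⟩, t)).coeff 1 * ((ur t : ℝ):ℂ) *
            ((φc (k-1)).coeff (k-1)) =
            (v pp.1 : ℂ) * ((φc k).coeff k) * (((Pm k pp.2 t : ℝ):ℂ) * ((ur t : ℝ):ℂ)) := by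
          intro t
          have h9 : (Lc pp (⟨0,hk0⟩, t)).coeff 1 * ((ur t : ℝ):ℂ) * ((φc (k-1)).coeff (k-1)) =
              ((Lc pp (⟨0,hk0⟩, t)).coeff 1 * ((φc (k-1)).coeff (k-1))) * ((ur t : ℝ):ℂ) := by
            ring
          rw [h9, hX0 pp t]
          ring
        rw [Finset.sum_congr rfl (fun t _ => hterm2 t), ← Finset.mul_sum, hxsum pp.2, mul_zero]
      exact (mul_eq_zero.mp hmul).resolve_right hlc
    have hζ0 : (Lc.mulVec fun q => Polynomial.C (ξ q)) = 0 := by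
      have hconst : ∀ pp, ∃ cc0 : ℂ, (Lc.mulVec fun q => Polynomial.C (ξ q)) pp =
          Polynomial.C cc0 := by
        intro pp
        refine ⟨((Lc.mulVec fun q => Polynomial.C (ξ q)) pp).coeff 0, ?_⟩
        have he := Polynomial.eq_X_add_C_of_degree_le_one (hζdeg ξ pp)
        rw [hcoeff1 pp] at he
        simpa using he
      choose cf hcf using hconst
      have hζw : ∀ t, (∑ j : Fin k, (w j : ℂ) * ξ (j, t)) = 0 := by
        intro t
        rw [Finset.sum_eq_single (⟨0, hk0⟩ : Fin k)]
        · rw [hξdef]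
          simp only []
          rw [hw0]
          simp
        · intro j _ hj
          rw [hξdef]
          simp only []
          rw [if_neg (fun h0 => hj (Fin.ext h0)), mul_zero]
        · intro hmem; exact absurd (Finset.mem_univ _) hmem
      funext pp
      obtain ⟨i, s⟩ := pp
      have hstepres := hstep ξ hζw s
      have hsum3 : (∑ i : Fin k, Polynomial.C (cf (i, s)) * φc (k - 1 - (i:ℕ))) = 0 := by
        rw [← hstepres]
        apply Finset.sum_congr rfl
        intro i _
        rw [mul_comm, ← hcf (i, s)]
      have hz := indep _ hsum3
      rw [hcf (i, s), hz i]
      simp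
    refine KEY 0 ξ hζ0 ?_
    intro u cc _ heq
    have hu0 : u = 0 := by
      funext t
      have h := congrFun heq (⟨k-1, by omega⟩, t)
      simp only [Pi.zero_apply] at h
      rw [hξdef] at h
      simp only [] at h
      rw [if_neg (by show ¬ (k-1 = 0); omega), mul_zero, add_zero] at h
      have hidx : k - 1 - ((⟨k-1, by omega⟩ : Fin k) : ℕ) = 0 := by
        show k - 1 - (k-1) = 0
        omega
      rw [hidx, hφc0] at h
      simpa using h
    refine ⟨hu0, ?_⟩
    obtain ⟨t, ht⟩ := Function.ne_iff.mp hurne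
    have hurt : ur t ≠ 0 := by simpa using ht
    have h := congrFun heq (⟨0, hk0⟩, t)
    simp only [Pi.zero_apply] at h
    rw [hu0] at h
    simp only [Pi.zero_apply, mul_zero, zero_add] at h
    rw [hξdef] at h
    simp only [] at h
    rw [if_pos trivial] at h
    rcases mul_eq_zero.mp h with h' | h'
    · exact h'
    · exact absurd h' (by exact_mod_cast hurt)
  · -- the finite case : p_w has a complex root lam0
    set pw : Polynomial ℂ := ∑ i : Fin k, Polynomial.C ((w i : ℂ)) * φc (k - 1 - (i : ℕ)) with hpwdef
    have hco : pw.coeff (k-1) = (w ⟨0, hk0⟩ : ℂ) * ((φc (k-1)).coeff (k-1)) := by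
      rw [hpwdef, Polynomial.finset_sum_coeff]
      rw [Finset.sum_eq_single (⟨0, hk0⟩ : Fin k)]
      · have hidx0 : k - 1 - ((⟨0, hk0⟩ : Fin k) : ℕ) = k - 1 := by simp
        rw [hidx0, Polynomial.coeff_C_mul]
      · intro i _ hi
        rw [Polynomial.coeff_C_mul]
        have hiv : 1 ≤ (i : ℕ) := by
          by_contra hcon
          push_neg at hcon
          exact hi (Fin.ext (by show (i:ℕ) = 0; omega))
        rw [hφck _ _ (by omega : k - 1 - (i:ℕ) < k - 1), mul_zero]
      · intro hmem; exact absurd (Finset.mem_univ _) hmem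
    have hpwco_ne : pw.coeff (k-1) ≠ 0 := by
      rw [hco]
      exact mul_ne_zero (by exact_mod_cast hw0) (hcc (k-1))
    have hdegpw : (0 : WithBot ℕ) < pw.degree := by
      calc (0 : WithBot ℕ) < ((k-1 : ℕ) : WithBot ℕ) := by
            exact_mod_cast (by omega : 0 < k - 1)
        _ ≤ pw.degree := Polynomial.le_degree_of_ne_zero hpwco_ne
    obtain ⟨lam0, hlam0⟩ := Complex.exists_root hdegpw
    have hevpw : (∑ j : Fin k, (w j : ℂ) * Polynomial.eval lam0 (φc (k - 1 - (j:ℕ)))) = 0 := by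
      have h := hlam0
      rw [Polynomial.IsRoot, hpwdef, Polynomial.eval_finset_sum] at h
      rw [← h]
      apply Finset.sum_congr rfl
      intro j _
      rw [Polynomial.eval_mul, Polynomial.eval_C]
    obtain ⟨xt, hxtne, hxt⟩ := Matrix.exists_mulVec_eq_zero_iff.mpr (hPdet0 lam0)
    set ξ : Fin k × Fin n → ℂ :=
      fun pp => Polynomial.eval lam0 (φc (k - 1 - (pp.1 : ℕ))) * xt pp.2 with hξdef
    have hζeval : ∀ pp, Polynomial.eval lam0 ((Lc.mulVec fun q => Polynomial.C (ξ q)) pp) = 0 := by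
      intro pp
      rw [Thm15.eval_mulVec]
      exact congrFun (hpoint lam0 xt hxt) pp
    have hζw : ∀ t, (∑ j : Fin k, (w j : ℂ) * ξ (j, t)) = 0 := by
      intro t
      have hre : (∑ j : Fin k, (w j : ℂ) * ξ (j, t)) =
          (∑ j : Fin k, (w j : ℂ) * Polynomial.eval lam0 (φc (k - 1 - (j:ℕ)))) * xt t := by
        rw [Finset.sum_mul]
        apply Finset.sum_congr rfl
        intro j _
        rw [hξdef]
        simp only []
        ring
      rw [hre, hevpw, zero_mul]
    have hfac : ∀ pp : Fin k × Fin n, ∃ cc1 : ℂ, (Lc.mulVec fun q => Polynomial.C (ξ q)) pp =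
        (X - Polynomial.C lam0) * Polynomial.C cc1 := by
      intro pp
      have hd := hζdeg ξ pp
      have he := Polynomial.eq_X_add_C_of_degree_le_one hd
      have hev := hζeval pp
      refine ⟨((Lc.mulVec fun q => Polynomial.C (ξ q)) pp).coeff 1, ?_⟩
      obtain ⟨c1, c0, hc1, hc0⟩ :
          ∃ c1 c0 : ℂ, ((Lc.mulVec fun q => Polynomial.C (ξ q)) pp).coeff 1 = c1 ∧
            ((Lc.mulVec fun q => Polynomial.C (ξ q)) pp).coeff 0 = c0 := ⟨_, _, rfl, rfl⟩
      rw [hc1, hc0] at he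
      rw [hc1]
      rw [he] at hev ⊢
      rw [Polynomial.eval_add, Polynomial.eval_mul, Polynomial.eval_C, Polynomial.eval_X,
        Polynomial.eval_C] at hev
      have hc0eq : c0 = -(c1 * lam0) := by linear_combination hev
      rw [hc0eq, map_neg, _root_.map_mul]
      ring
    choose cf hcf using hfac
    have hζ0 : (Lc.mulVec fun q => Polynomial.C (ξ q)) = 0 := by
      funext pp
      obtain ⟨i, s⟩ := pp
      have hstepres := hstep ξ hζw s
      have hsum2 : (X - Polynomial.C lam0) * (∑ i : Fin k,
          φc (k - 1 - (i:ℕ)) * Polynomial.C (cf (i, s))) = 0 := by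
        rw [Finset.mul_sum, ← hstepres]
        apply Finset.sum_congr rfl
        intro i _
        rw [hcf (i, s)]
        ring
      have hXne : (X - Polynomial.C lam0) ≠ (0 : Polynomial ℂ) := Polynomial.X_sub_C_ne_zero lam0
      have hsum3 : (∑ i : Fin k, Polynomial.C (cf (i, s)) * φc (k - 1 - (i:ℕ))) = 0 := by
        have h9 := (mul_eq_zero.mp hsum2).resolve_left hXne
        rw [← h9]
        apply Finset.sum_congr rfl
        intro i _
        ring
      have hz := indep _ hsum3
      rw [hcf (i, s), hz i]
      simp
    refine KEY (lam0 + 1) ξ hζ0 ?_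
    intro u cc _ heq
    have hlast : ∀ t, u t + cc * xt t = 0 := by
      intro t
      have h := congrFun heq (⟨k-1, by omega⟩, t)
      simp only [Pi.zero_apply] at h
      rw [hξdef] at h
      simp only [] at h
      have hidx : k - 1 - ((⟨k-1, by omega⟩ : Fin k) : ℕ) = 0 := by
        show k - 1 - (k-1) = 0
        omega
      rw [hidx, hφc0] at h
      simpa using h
    have hsecond : ∀ t, Polynomial.eval (lam0+1) (φc 1) * u t +
        cc * (Polynomial.eval lam0 (φc 1) * xt t) = 0 := by
      intro t
      have h := congrFun heq (⟨k-2, by omega⟩, t)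
      simp only [Pi.zero_apply] at h
      rw [hξdef] at h
      simp only [] at h
      have hidx : k - 1 - ((⟨k-2, by omega⟩ : Fin k) : ℕ) = 1 := by
        show k - 1 - (k-2) = 1
        omega
      rw [hidx] at h
      exact h
    have hdiffeq : ((a 0 : ℂ)) *
        (Polynomial.eval lam0 (φc 1) - Polynomial.eval (lam0+1) (φc 1)) = -1 := by
      have h1 := congrArg (Polynomial.eval lam0) hφc1
      have h2 := congrArg (Polynomial.eval (lam0+1)) hφc1
      rw [Polynomial.eval_mul, Polynomial.eval_C, Polynomial.eval_sub, Polynomial.eval_X,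
        Polynomial.eval_C] at h1
      rw [Polynomial.eval_mul, Polynomial.eval_C, Polynomial.eval_sub, Polynomial.eval_X,
        Polynomial.eval_C] at h2
      rw [mul_sub, h1, h2]
      ring
    have hdne : Polynomial.eval lam0 (φc 1) - Polynomial.eval (lam0+1) (φc 1) ≠ 0 := by
      intro h0
      rw [h0, mul_zero] at hdiffeq
      norm_num at hdiffeq
    have hcc0 : cc = 0 := by
      obtain ⟨t, ht⟩ := Function.ne_iff.mp hxtne
      have hxtt : xt t ≠ 0 := by simpa using ht
      have hu0 : u t = -(cc * xt t) := eq_neg_of_add_eq_zero_left (hlast t)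
      have h := hsecond t
      rw [hu0] at h
      have h2 : cc * xt t *
          (Polynomial.eval lam0 (φc 1) - Polynomial.eval (lam0+1) (φc 1)) = 0 := by
        linear_combination h
      rcases mul_eq_zero.mp h2 with h3 | h3
      · rcases mul_eq_zero.mp h3 with h4 | h4
        · exact h4
        · exact absurd h4 hxtt
      · exact absurd h3 hdne
    refine ⟨?_, hcc0⟩
    funext t
    have h := hlast t
    rw [hcc0, zero_mul, add_zero] at h
    simpa using h

end Thm15


theorem statement_15
    (n k : ℕ) (hn : 0 < n) (hk : 2 ≤ k)
    (a b c : ℕ → ℝ) (ha : ∀ j, a j ≠ 0)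
    (φ : ℕ → Polynomial ℝ) (hφ0 : φ 0 = 1)
    (hφ1 : C (a 0) * φ 1 = (X - C (b 0)) * φ 0)
    (hφrec : ∀ j, C (a (j + 1)) * φ (j + 2) =
      (X - C (b (j + 1))) * φ (j + 1) - C (c (j + 1)) * φ j)
    (Pm : ℕ → Matrix (Fin n) (Fin n) ℝ) (hPk : Pm k ≠ 0)
    (hsing : (matP n k φ Pm).det = 0)
    (L : Matrix (Fin k × Fin n) (Fin k × Fin n) (Polynomial ℝ)) (hL : IsPencil L)
    (h1 : ∃ v : Fin k → ℝ, Ansatz1 n k φ Pm L v)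
    (h2 : ∃ w : Fin k → ℝ, Ansatz2 n k φ Pm L w) :
    ¬ IsLinearization n k L (matP n k φ Pm) := by
  obtain ⟨v, h1⟩ := h1
  obtain ⟨w, h2⟩ := h2
  exact Thm15.main_core n k hn hk a b c ha φ hφ0 hφ1 hφrec Pm hsing L hL v h1 w h2
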